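/- Let a_X < b_X and a_Y < b_Y be real numbers. Then Unif[a_X, b_X] second-order stochastically dominates Unif[a_Y, b_Y] if and only if a_X ≥ a_Y and (a_X + b_X)/2 ≥ (a_Y + b_Y)/2 (i.e. the means are ordered). -/

import Mathlib

open MeasureTheory ProbabilityTheory
open scoped NNReal ENNReal

/-- `P` second-order stochastically dominates `Q`. -/
def SSD (P Q : Measure ℝ) : Prop :=
  ∀ u : ℝ, (∫ z in Set.Iic u, (cdf P z - cdf Q z)) ≤ 0

/-- The uniform probability measure on the interval `[a, b]`. -/
noncomputable def unif (a b : ℝ) : Measure ℝ :=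
  (ENNReal.ofReal (b - a))⁻¹ • (volume.restrict (Set.Icc a b))

open Set

instance unif_prob (a b : ℝ) [Fact (a < b)] : IsProbabilityMeasure (unif a b) := by
  constructor
  have h : a < b := Fact.out
  rw [unif, Measure.smul_apply, Measure.restrict_apply MeasurableSet.univ, Set.univ_inter,
    Real.volume_Icc, smul_eq_mul, ENNReal.inv_mul_cancel]
  · simp [sub_pos.2 h, ne_of_gt]
  · exact ENNReal.ofReal_ne_top

/-- The cdf of the uniform distribution, as an explicit function. -/
noncomputable def F (a b z : ℝ) : ℝ := max 0 (min ((z - a) / (b - a)) 1)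

lemma cdf_unif (a b : ℝ) (h : a < b) (z : ℝ) : cdf (unif a b) z = F a b z := by
  have : Fact (a < b) := ⟨h⟩
  rw [cdf_eq_real, measureReal_def, unif, Measure.smul_apply, Measure.restrict_apply measurableSet_Iic,
    smul_eq_mul]
  have hset : Iic z ∩ Icc a b = Icc a (min z b) := by
    ext x; simp [Set.mem_Icc, le_min_iff]; tauto
  rw [hset, Real.volume_Icc, ENNReal.toReal_mul, ENNReal.toReal_inv, ENNReal.toReal_ofReal
    (by linarith : (0:ℝ) ≤ b - a)]
  have hba : (0:ℝ) < b - a := by linarith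
  rcases le_or_gt (min z b) a with hc | hc
  · rw [ENNReal.ofReal_eq_zero.2 (by linarith)]
    simp only [ENNReal.toReal_zero, mul_zero, F]
    rw [max_eq_left]
    rcases le_or_gt z b with h1 | h1
    · have : min z b = z := min_eq_left h1
      rw [this] at hc
      exact min_le_of_left_le (div_nonpos_of_nonpos_of_nonneg (by linarith) hba.le)
    · have : min z b = b := min_eq_right h1.le
      rw [this] at hc; linarith
  · rw [ENNReal.toReal_ofReal (by linarith)]
    rw [F]
    have : (b - a)⁻¹ * (min z b - a) = min ((z - a)/(b - a)) 1 := by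
      rw [inv_mul_eq_div, ← min_sub_sub_right z b a, ← min_div_div_right hba.le, div_self hba.ne']
    rw [this, max_eq_right]
    rcases le_total z b with h1 | h1
    · refine le_min (div_nonneg ?_ hba.le) zero_le_one
      rw [min_eq_left h1] at hc; linarith
    · exact le_min (div_nonneg (by linarith) hba.le) zero_le_one

lemma F_cont (a b : ℝ) : Continuous (F a b) := by
  apply continuous_const.max (Continuous.min _ continuous_const)
  fun_prop

lemma F_nonneg (a b z : ℝ) : 0 ≤ F a b z := le_max_left _ _

lemma F_zero (a b z : ℝ) (hb : a < b) (hz : z ≤ a) : F a b z = 0 := by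
  rw [F, max_eq_left]
  exact min_le_of_left_le (div_nonpos_of_nonpos_of_nonneg (by linarith) (by linarith))

lemma F_mid (a b z : ℝ) (hb : a < b) (h1 : a ≤ z) (h2 : z ≤ b) : F a b z = (z - a) / (b - a) := by
  rw [F, min_eq_left (by rw [div_le_one (by linarith)]; linarith), max_eq_right
    (div_nonneg (by linarith) (by linarith))]

lemma F_one (a b z : ℝ) (hb : a < b) (hz : b ≤ z) : F a b z = 1 := by
  rw [F, min_eq_right (by rw [le_div_iff₀ (by linarith : (0:ℝ) < b - a)]; linarith),
    max_eq_right zero_le_one]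

lemma F_integrable (a b u : ℝ) (hb : a < b) : IntegrableOn (F a b) (Iic u) := by
  rcases le_or_gt u a with h | h
  · rw [integrableOn_congr_fun (g := fun _ => (0:ℝ)) ?_ measurableSet_Iic]
    · exact (integrable_zero _ _ _).integrableOn
    · intro z hz; exact F_zero a b z hb (le_trans hz h)
  · rw [← Set.Iic_union_Ioc_eq_Iic h.le]
    apply IntegrableOn.union
    · rw [integrableOn_congr_fun (g := fun _ => (0:ℝ)) ?_ measurableSet_Iic]
      · exact (integrable_zero _ _ _).integrableOn
      · intro z hz; exact F_zero a b z hb hz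
    · exact (F_cont a b).integrableOn_Ioc

lemma integral_F_bot (a b u : ℝ) (hb : a < b) (hu : u ≤ a) :
    ∫ z in Iic u, F a b z = 0 := by
  rw [setIntegral_congr_fun measurableSet_Iic (g := fun _ => (0:ℝ))
    (fun z hz => F_zero a b z hb (le_trans hz hu))]
  simp

lemma integral_F_mid (a b u : ℝ) (hb : a < b) (h1 : a ≤ u) (h2 : u ≤ b) :
    ∫ z in Iic u, F a b z = (u - a)^2 / (2 * (b - a)) := by
  rw [← Set.Iic_union_Ioc_eq_Iic h1,
    setIntegral_union (Set.Iic_disjoint_Ioc le_rfl) measurableSet_Ioc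
      (F_integrable a b a hb) ((F_cont a b).integrableOn_Ioc),
    integral_F_bot a b a hb le_rfl, zero_add,
    setIntegral_congr_fun measurableSet_Ioc (g := fun z => (z - a) / (b - a))
      (fun z hz => F_mid a b z hb hz.1.le (hz.2.trans h2)),
    ← intervalIntegral.integral_of_le h1]
  rw [intervalIntegral.integral_div,
    intervalIntegral.integral_sub (intervalIntegral.intervalIntegrable_id) intervalIntegrable_const,
    integral_id, intervalIntegral.integral_const]
  have : b - a ≠ 0 := by linarith
  field_simp
  ring

lemma integral_F_top (a b u : ℝ) (hb : a < b) (hu : b ≤ u) :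
    ∫ z in Iic u, F a b z = u - (a + b) / 2 := by
  rw [← Set.Iic_union_Ioc_eq_Iic hu,
    setIntegral_union (Set.Iic_disjoint_Ioc le_rfl) measurableSet_Ioc
      (F_integrable a b b hb) ((F_cont a b).integrableOn_Ioc),
    integral_F_mid a b b hb hb.le le_rfl,
    setIntegral_congr_fun measurableSet_Ioc (g := fun _ => (1:ℝ))
      (fun z hz => F_one a b z hb hz.1.le)]
  have h1 : (b - a)^2 / (2 * (b - a)) = (b - a) / 2 := by
    have : b - a ≠ 0 := by linarith
    field_simp
  rw [h1]
  simp [Real.volume_Ioc, ENNReal.toReal_ofReal (by linarith : (0:ℝ) ≤ u - b)]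
  rw [max_eq_left (by linarith)]
  ring

/-- SSD between uniform distributions is characterized by ordered lower bounds and
ordered means. -/
theorem ssd_uniform_iff (aX bX aY bY : ℝ) (hX : aX < bX) (hY : aY < bY) :
    SSD (unif aX bX) (unif aY bY) ↔ aY ≤ aX ∧ (aY + bY) / 2 ≤ (aX + bX) / 2 := by
  have key : ∀ u : ℝ, (∫ z in Set.Iic u, (cdf (unif aX bX) z - cdf (unif aY bY) z))
      = (∫ z in Iic u, F aX bX z) - ∫ z in Iic u, F aY bY z := by
    intro u
    simp_rw [cdf_unif aX bX hX, cdf_unif aY bY hY]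
    exact integral_sub (F_integrable aX bX u hX) (F_integrable aY bY u hY)
  have hssd : SSD (unif aX bX) (unif aY bY) ↔
      ∀ u : ℝ, (∫ z in Iic u, F aX bX z) ≤ ∫ z in Iic u, F aY bY z := by
    unfold SSD
    constructor <;> intro h u <;> have := h u
    · rw [key u] at this; linarith
    · rw [key u]; linarith
  rw [hssd]
  constructor
  · intro h
    constructor
    · by_contra hc
      push_neg at hc
      have hu := h (min aY bX)
      rw [integral_F_bot aY bY _ hY (min_le_left _ _),
        integral_F_mid aX bX _ hX (le_min hc.le hX.le) (min_le_right _ _)] at hu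
      have h1 : aX < min aY bX := lt_min hc hX
      nlinarith [sq_nonneg (min aY bX - aX), div_pos (by nlinarith : (0:ℝ) < (min aY bX - aX)^2)
        (by linarith : (0:ℝ) < 2 * (bX - aX))]
    · have hu := h (max bX bY)
      rw [integral_F_top aX bX _ hX (le_max_left _ _),
        integral_F_top aY bY _ hY (le_max_right _ _)] at hu
      linarith
  · rintro ⟨h1, h2⟩ u
    rcases le_or_gt u aX with hu1 | hu1
    · rw [integral_F_bot aX bX u hX hu1]
      exact setIntegral_nonneg measurableSet_Iic (fun z _ => F_nonneg aY bY z)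
    · have haY : aY ≤ u := h1.trans hu1.le
      rcases le_or_gt u bX with hu2 | hu2
      · rw [integral_F_mid aX bX u hX hu1.le hu2]
        rcases le_or_gt u bY with hu3 | hu3
        · rw [integral_F_mid aY bY u hY haY hu3, div_le_div_iff₀ (by linarith) (by linarith)]
          nlinarith [mul_nonneg (sq_nonneg (u - aX))
              (show (0:ℝ) ≤ (bX - aX) + 2*(aX - aY) - (bY - aY) by linarith),
            mul_nonneg (mul_nonneg (mul_nonneg (by linarith : (0:ℝ) ≤ u - aX)
              (by linarith : (0:ℝ) ≤ aX - aY)) (by linarith : (0:ℝ) ≤ bX - u))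
              (by norm_num : (0:ℝ) ≤ 2),
            mul_nonneg (sq_nonneg (aX - aY)) (by linarith : (0:ℝ) ≤ bX - aX)]
        · rw [integral_F_top aY bY u hY hu3.le, div_le_iff₀ (by linarith : (0:ℝ) < 2 * (bX - aX))]
          nlinarith [mul_nonneg (by linarith : (0:ℝ) ≤ bX - u) (by linarith : (0:ℝ) ≤ u - aX),
            mul_nonneg (by linarith : (0:ℝ) ≤ bX - aX)
              (by linarith : (0:ℝ) ≤ (u - bY) + (aX - aY))]
      · rw [integral_F_top aX bX u hX hu2.le]
        rcases le_or_gt u bY with hu3 | hu3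
        · rw [integral_F_mid aY bY u hY haY hu3, le_div_iff₀ (by linarith : (0:ℝ) < 2 * (bY - aY))]
          nlinarith [sq_nonneg (u - bY)]
        · rw [integral_F_top aY bY u hY hu3.le]
          linarith
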